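/- arXiv:2309.06040 — 10 statements merged into one kernel-verified Lean document; each statement's English description precedes it below -/
import Mathlib

section
/- Let (Λ_t)_{t≥0} be a one-parameter family of positive unital linear maps on d×d complex matrices satisfying the semigroup law Λ_{s+t} = Λ_s ∘ Λ_t for all s, t ≥ 0. Let E and F be finite-outcome observables on ℂ^d. If the observables Λ_{t₁}∘E and Λ_{t₁}∘F are jointly measurable for some t₁ ≥ 0, then Λ_{t₂}∘E and Λ_{t₂}∘F are jointly measurable for every t₂ ≥ t₁. -/
open Matrix BigOperators
open scoped ComplexOrder

/-- A finite-outcome observable on `ℂ^d`. -/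
def IsObservable {d : ℕ} {Ω : Type*} [Fintype Ω] [Nonempty Ω]
    (E : Ω → Matrix (Fin d) (Fin d) ℂ) : Prop :=
  (∀ i, (E i).PosSemidef) ∧ ∑ i, E i = 1

/-- Joint measurability of two finite-outcome observables. -/
def JointlyMeasurable {d : ℕ} {Ω₁ Ω₂ : Type*} [Fintype Ω₁] [Fintype Ω₂]
    (E : Ω₁ → Matrix (Fin d) (Fin d) ℂ) (F : Ω₂ → Matrix (Fin d) (Fin d) ℂ) : Prop :=
  ∃ G : Ω₁ × Ω₂ → Matrix (Fin d) (Fin d) ℂ,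
    (∀ p, (G p).PosSemidef) ∧ (∀ i, ∑ j, G (i, j) = E i) ∧ (∀ j, ∑ i, G (i, j) = F j)

/-- for a semigroup of positive unital linear maps, joint measurability of the
evolved observables at some time `t₁ ≥ 0` persists for all later times `t₂ ≥ t₁`. -/
theorem jointMeasurability_markovian_semigroup
    {d : ℕ} (hd : 1 ≤ d) {Ω₁ Ω₂ : Type*} [Fintype Ω₁] [Fintype Ω₂] [Nonempty Ω₁] [Nonempty Ω₂]
    (Λ : ℝ → Matrix (Fin d) (Fin d) ℂ →ₗ[ℂ] Matrix (Fin d) (Fin d) ℂ)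
    (hΛpos : ∀ t, 0 ≤ t → ∀ A : Matrix (Fin d) (Fin d) ℂ, A.PosSemidef → (Λ t A).PosSemidef)
    (hΛunital : ∀ t, 0 ≤ t → Λ t 1 = 1)
    (hsemigroup : ∀ s t, 0 ≤ s → 0 ≤ t → Λ (s + t) = (Λ s).comp (Λ t))
    (E : Ω₁ → Matrix (Fin d) (Fin d) ℂ) (F : Ω₂ → Matrix (Fin d) (Fin d) ℂ)
    (hE : IsObservable E) (hF : IsObservable F)
    (t₁ : ℝ) (ht₁ : 0 ≤ t₁)
    (hJM : JointlyMeasurable (fun i => Λ t₁ (E i)) (fun j => Λ t₁ (F j)))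
    (t₂ : ℝ) (ht₂ : t₁ ≤ t₂) :
    JointlyMeasurable (fun i => Λ t₂ (E i)) (fun j => Λ t₂ (F j)) := by
  obtain ⟨G, hGpos, hG1, hG2⟩ := hJM
  have hs : 0 ≤ t₂ - t₁ := sub_nonneg.mpr ht₂
  have ht₂' : Λ t₂ = (Λ (t₂ - t₁)).comp (Λ t₁) := by
    have := hsemigroup (t₂ - t₁) t₁ hs ht₁
    rwa [sub_add_cancel] at this
  refine ⟨fun p => Λ (t₂ - t₁) (G p), fun p => hΛpos _ hs _ (hGpos p), ?_, ?_⟩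
  · intro i
    rw [ht₂', ← map_sum]
    simp [hG1 i]
  · intro j
    rw [ht₂', ← map_sum]
    simp [hG2 j]
end

section
/- Let E be a finite-outcome observable on ℂ^d and let F be a finite-outcome observable on ℂ^d all of whose effects F(j) are diagonal matrices. For n, m ∈ Fin d define the coherence coh_{nm}(E) := ∑_i |E(i)_{nm}| and the squared Hellinger distance d²_{nm}(F) := 1 − ∑_j √(F(j)_{nn} · F(j)_{mm}) (the diagonal entries of positive semidefinite matrices being nonnegative reals). If E and F are jointly measurable, then for all n, m: coh_{nm}(E) + d²_{nm}(F) ≤ 1, i.e., ∑_i |E(i)_{nm}| ≤ ∑_j √(F(j)_{nn} · F(j)_{mm}). -/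
open Matrix BigOperators
open scoped ComplexOrder

private lemma psd_diag_re_nonneg {d : ℕ} {M : Matrix (Fin d) (Fin d) ℂ}
    (hM : M.PosSemidef) (n : Fin d) : 0 ≤ (M n n).re := by
  obtain ⟨B, rfl⟩ : ∃ B : Matrix (Fin d) (Fin d) ℂ, M = Bᴴ * B := by
    open scoped MatrixOrder in exact CStarAlgebra.nonneg_iff_eq_star_mul_self.mp hM.nonneg
  rw [Matrix.mul_apply, Complex.re_sum]
  refine Finset.sum_nonneg fun k _ => ?_
  rw [Matrix.conjTranspose_apply, Complex.star_def, ← Complex.normSq_eq_conj_mul_self]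
  simpa using Complex.normSq_nonneg _

private lemma psd_entry_abs_le {d : ℕ} {M : Matrix (Fin d) (Fin d) ℂ}
    (hM : M.PosSemidef) (n m : Fin d) :
    ‖M n m‖ ≤ Real.sqrt ((M n n).re * (M m m).re) := by
  obtain ⟨B, rfl⟩ : ∃ B : Matrix (Fin d) (Fin d) ℂ, M = Bᴴ * B := by
    open scoped MatrixOrder in exact CStarAlgebra.nonneg_iff_eq_star_mul_self.mp hM.nonneg
  have h1 : ((Bᴴ * B) n n).re = ∑ k, ‖B k n‖ ^ 2 := by
    rw [Matrix.mul_apply, Complex.re_sum]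
    refine Finset.sum_congr rfl fun k _ => ?_
    rw [Matrix.conjTranspose_apply, Complex.star_def, ← Complex.normSq_eq_conj_mul_self]
    simp [Complex.sq_norm]
  have h2 : ((Bᴴ * B) m m).re = ∑ k, ‖B k m‖ ^ 2 := by
    rw [Matrix.mul_apply, Complex.re_sum]
    refine Finset.sum_congr rfl fun k _ => ?_
    rw [Matrix.conjTranspose_apply, Complex.star_def, ← Complex.normSq_eq_conj_mul_self]
    simp [Complex.sq_norm]
  rw [h1, h2]
  calc ‖(Bᴴ * B) n m‖
      ≤ ∑ k, ‖B k n‖ * ‖B k m‖ := by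
        rw [Matrix.mul_apply]
        refine (norm_sum_le _ _).trans_eq ?_
        simp [Matrix.conjTranspose_apply, _root_.map_mul]
    _ ≤ Real.sqrt (∑ k, ‖B k n‖ ^ 2) *
        Real.sqrt (∑ k, ‖B k m‖ ^ 2) :=
        Real.sum_mul_le_sqrt_mul_sqrt _ _ _
    _ = Real.sqrt ((∑ k, ‖B k n‖ ^ 2) * (∑ k, ‖B k m‖ ^ 2)) := by
        rw [← Real.sqrt_mul (by positivity)]

/-- the coherence–Hellinger-distance tradeoff: if `E` is jointly measurable
with a diagonal observable `F`, then for all `n m`,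
`coh_{nm}(E) + d²_{nm}(F) ≤ 1`, i.e. `∑ᵢ |E(i)_{nm}| ≤ ∑ⱼ √(F(j)_{nn} F(j)_{mm})`. -/
theorem coherence_hellinger_tradeoff
    {d : ℕ} (hd : 1 ≤ d) {Ω₁ Ω₂ : Type*} [Fintype Ω₁] [Fintype Ω₂] [Nonempty Ω₁] [Nonempty Ω₂]
    (E : Ω₁ → Matrix (Fin d) (Fin d) ℂ) (F : Ω₂ → Matrix (Fin d) (Fin d) ℂ)
    (hE : IsObservable E) (hF : IsObservable F)
    (hFdiag : ∀ j, ∀ n m : Fin d, n ≠ m → F j n m = 0)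
    (hJM : JointlyMeasurable E F) :
    ∀ n m : Fin d,
      ∑ i, ‖E i n m‖ ≤ ∑ j, Real.sqrt ((F j n n).re * (F j m m).re) := by
  intro n m
  obtain ⟨G, hGpos, hGE, hGF⟩ := hJM
  calc ∑ i, ‖E i n m‖
      ≤ ∑ i, ∑ j, ‖G (i, j) n m‖ := by
        refine Finset.sum_le_sum fun i _ => ?_
        rw [← hGE i, Matrix.sum_apply]
        exact norm_sum_le _ _
    _ ≤ ∑ i, ∑ j, Real.sqrt ((G (i, j) n n).re * (G (i, j) m m).re) :=
        Finset.sum_le_sum fun i _ => Finset.sum_le_sum fun j _ =>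
          psd_entry_abs_le (hGpos (i, j)) n m
    _ = ∑ j, ∑ i, Real.sqrt ((G (i, j) n n).re) * Real.sqrt ((G (i, j) m m).re) := by
        rw [Finset.sum_comm]
        refine Finset.sum_congr rfl fun j _ => Finset.sum_congr rfl fun i _ => ?_
        rw [Real.sqrt_mul (psd_diag_re_nonneg (hGpos (i, j)) n)]
    _ ≤ ∑ j, Real.sqrt (∑ i, (G (i, j) n n).re) * Real.sqrt (∑ i, (G (i, j) m m).re) :=
        Finset.sum_le_sum fun j _ =>
          Real.sum_sqrt_mul_sqrt_le _ (fun i => psd_diag_re_nonneg (hGpos (i, j)) n)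
            (fun i => psd_diag_re_nonneg (hGpos (i, j)) m)
    _ = ∑ j, Real.sqrt ((F j n n).re * (F j m m).re) := by
        refine Finset.sum_congr rfl fun j _ => ?_
        rw [← Real.sqrt_mul (Finset.sum_nonneg fun i _ =>
          psd_diag_re_nonneg (hGpos (i, j)) n)]
        congr 2 <;> rw [← hGF j] <;> simp [Matrix.sum_apply, Complex.re_sum]
end

section
/- Let E be a finite-outcome observable on ℂ^d and let F be a finite-outcome observable on ℂ^d all of whose effects F(j) are diagonal matrices. For n, m ∈ Fin d set s_{nm} := ∑_j √(F(j)_{nn} · F(j)_{mm}), and assume s_{nm} > 0 for all n, m. If for every outcome i of E the matrix M(i) with entries M(i)_{nm} = E(i)_{nm} / s_{nm} is positive semidefinite, then E and F are jointly measurable. -/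
open Matrix BigOperators
open scoped ComplexOrder

/-- a sufficient condition for joint measurability with a diagonal observable:
if all the rescaled matrices `M(i)_{nm} = E(i)_{nm} / s_{nm}` with
`s_{nm} = ∑ⱼ √(F(j)_{nn} F(j)_{mm}) > 0` are positive semidefinite,
then `E` and `F` are jointly measurable. -/
theorem jointMeasurability_of_rescaled_posSemidef
    {d : ℕ} (hd : 1 ≤ d) {Ω₁ Ω₂ : Type*} [Fintype Ω₁] [Fintype Ω₂] [Nonempty Ω₁] [Nonempty Ω₂]
    (E : Ω₁ → Matrix (Fin d) (Fin d) ℂ) (F : Ω₂ → Matrix (Fin d) (Fin d) ℂ)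
    (hE : IsObservable E) (hF : IsObservable F)
    (hFdiag : ∀ j, ∀ n m : Fin d, n ≠ m → F j n m = 0)
    (s : Fin d → Fin d → ℝ)
    (hs : ∀ n m, s n m = ∑ j, Real.sqrt ((F j n n).re * (F j m m).re))
    (hspos : ∀ n m, 0 < s n m)
    (hM : ∀ i, (Matrix.of fun n m => E i n m / (s n m : ℂ)).PosSemidef) :
    JointlyMeasurable E F := by
  classical
  -- diagonal entries of F j are nonneg reals
  have hdiag_nonneg : ∀ (j : Ω₂) (n : Fin d), 0 ≤ F j n n := by
    intro j n
    have := (hF.1 j).dotProduct_mulVec_nonneg (Pi.single n 1)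
    simpa [dotProduct, Matrix.mulVec, Pi.single_apply] using this
  have hre_nonneg : ∀ (j : Ω₂) (n : Fin d), 0 ≤ (F j n n).re := fun j n =>
    (Complex.nonneg_iff.mp (hdiag_nonneg j n)).1
  have him_zero : ∀ (j : Ω₂) (n : Fin d), (F j n n).im = 0 := fun j n =>
    ((Complex.nonneg_iff.mp (hdiag_nonneg j n)).2).symm
  have hcoe : ∀ (j : Ω₂) (n : Fin d), ((F j n n).re : ℂ) = F j n n := by
    intro j n
    rw [Complex.ext_iff]
    simp [him_zero j n]
  -- s n n = 1
  have hsum_diag : ∀ n : Fin d, ∑ j, (F j n n).re = 1 := by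
    intro n
    have h1 : ∑ j, F j n n = 1 := by
      have := congrArg (fun M => M n n) hF.2
      simpa [Matrix.sum_apply, Matrix.one_apply] using this
    have := congrArg Complex.re h1
    simpa [Complex.re_sum] using this
  have hsnn : ∀ n : Fin d, s n n = 1 := by
    intro n
    rw [hs]
    have : ∀ j : Ω₂, Real.sqrt ((F j n n).re * (F j n n).re) = (F j n n).re := by
      intro j
      rw [Real.sqrt_mul_self (hre_nonneg j n)]
    simp_rw [this]
    exact hsum_diag n
  -- the diagonal conjugating matrices
  set D : Ω₂ → Matrix (Fin d) (Fin d) ℂ :=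
    fun j => Matrix.diagonal fun n => (Real.sqrt (F j n n).re : ℂ) with hD
  set M : Ω₁ → Matrix (Fin d) (Fin d) ℂ :=
    fun i => Matrix.of fun n m => E i n m / (s n m : ℂ) with hMdef
  refine ⟨fun p => D p.2 * M p.1 * D p.2, ?_, ?_, ?_⟩
  · rintro ⟨i, j⟩
    have hDH : (D j)ᴴ = D j := by
      simp [hD, Matrix.diagonal_conjTranspose, Function.comp,
        Complex.conj_ofReal, Pi.star_def]
    have := (hM i).mul_mul_conjTranspose_same (D j)
    rwa [hDH] at this
  · intro i
    ext n m
    simp only [Matrix.sum_apply, hD, hMdef, Matrix.diagonal_mul, Matrix.mul_diagonal,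
      Matrix.of_apply]
    have : ∀ j : Ω₂, (Real.sqrt (F j n n).re : ℂ) * (E i n m / (s n m : ℂ))
        * (Real.sqrt (F j m m).re : ℂ)
        = (E i n m / (s n m : ℂ)) * ((Real.sqrt ((F j n n).re * (F j m m).re) : ℝ) : ℂ) := by
      intro j
      rw [Real.sqrt_mul (hre_nonneg j n)]
      push_cast
      ring
    rw [Finset.sum_congr rfl fun j _ => this j, ← Finset.mul_sum]
    have hsc : ((s n m : ℝ) : ℂ) ≠ 0 := by
      exact_mod_cast (hspos n m).ne'
    rw [← Complex.ofReal_sum, ← hs]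
    field_simp
  · intro j
    ext n m
    simp only [Matrix.sum_apply, hD, hMdef, Matrix.diagonal_mul, Matrix.mul_diagonal,
      Matrix.of_apply]
    have : ∀ i : Ω₁, (Real.sqrt (F j n n).re : ℂ) * (E i n m / (s n m : ℂ))
        * (Real.sqrt (F j m m).re : ℂ)
        = (E i n m) * ((Real.sqrt (F j n n).re : ℂ) * (Real.sqrt (F j m m).re : ℂ)
            / (s n m : ℂ)) := by
      intro i; ring
    rw [Finset.sum_congr rfl fun i _ => this i, ← Finset.sum_mul]
    have hEsum : ∑ i, E i n m = if n = m then 1 else 0 := by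
      have := congrArg (fun M => M n m) hE.2
      simpa [Matrix.sum_apply, Matrix.one_apply] using this
    rw [hEsum]
    by_cases hnm : n = m
    · subst hnm
      rw [if_pos rfl, one_mul, hsnn n]
      rw [← Complex.ofReal_mul, Real.mul_self_sqrt (hre_nonneg j n)]
      simp [hcoe j n]
    · rw [if_neg hnm, zero_mul, hFdiag j n m hnm]
end

section
/- Let C ∈ Matrix (Fin d) (Fin d) ℂ be positive semidefinite with unit diagonal (C_{nn} = 1 for all n), and let Λ be the associated Schur channel Λ(A) := C ⋆ A, where ⋆ denotes the entrywise (Hadamard/Schur) product. Let F be a finite-outcome observable on ℂ^d all of whose effects F(j) are diagonal matrices. Then the following are equivalent: (i) for every nonempty finite outcome set Ω and every observable E : Ω → Matrix (Fin d) (Fin d) ℂ, the pair (Λ∘E, F) is jointly measurable; (ii) there exists a family (C^{(j)})_{j∈Ω_F} of positive semidefinite matrices indexed by the outcomes of F such that ∑_j C^{(j)} = C and C^{(j)}_{nn} = F(j)_{nn} for all n and j. -/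
open Matrix BigOperators
open scoped ComplexOrder

/-- Sums of positive semidefinite matrices are positive semidefinite. -/
lemma posSemidef_sum' {d : ℕ} {ι : Type*} (s : Finset ι) (f : ι → Matrix (Fin d) (Fin d) ℂ)
    (h : ∀ i ∈ s, (f i).PosSemidef) : (∑ i ∈ s, f i).PosSemidef := by
  classical
  induction s using Finset.induction_on with
  | empty => simpa using Matrix.PosSemidef.zero
  | insert _ _ hne ih =>
    rename_i a t
    rw [Finset.sum_insert hne]
    exact (h a (Finset.mem_insert_self a t)).add (ih fun i hi => h i (Finset.mem_insert_of_mem hi))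

/-- Schur product theorem. -/
lemma posSemidef_hadamard {d : ℕ} {A B : Matrix (Fin d) (Fin d) ℂ}
    (hA : A.PosSemidef) (hB : B.PosSemidef) : (A.hadamard B).PosSemidef := by
  obtain ⟨M, hM⟩ : ∃ M : Matrix (Fin d) (Fin d) ℂ, B = Mᴴ * M := by
    open scoped MatrixOrder in
    exact CStarAlgebra.nonneg_iff_eq_star_mul_self.mp hB.nonneg
  refine Matrix.PosSemidef.of_dotProduct_mulVec_nonneg ?_ ?_
  · unfold Matrix.IsHermitian
    ext n m
    simp only [conjTranspose_apply, hadamard_apply, star_mul']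
    rw [← conjTranspose_apply A, ← conjTranspose_apply B, hA.1, hB.1]
  · intro x
    have key : star x ⬝ᵥ ((A.hadamard B) *ᵥ x)
        = ∑ k, star (fun n => M k n * x n) ⬝ᵥ (A *ᵥ fun n => M k n * x n) := by
      subst hM
      simp only [dotProduct, mulVec, hadamard_apply, Matrix.mul_apply,
        conjTranspose_apply, Pi.star_apply, star_mul', Finset.mul_sum, Finset.sum_mul]
      conv_lhs => enter [2, n]; rw [Finset.sum_comm]
      rw [Finset.sum_comm]
      exact Finset.sum_congr rfl fun k _ => Finset.sum_congr rfl fun n _ =>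
        Finset.sum_congr rfl fun m _ => by ring
    rw [key]
    exact Finset.sum_nonneg fun k _ => hA.dotProduct_mulVec_nonneg _

/-- SDP characterisation for Schur channels. For a Schur channel
`Λ(A) = C ⋆ A` with `C` positive semidefinite of unit diagonal and a diagonal observable
`F`, the pair `(Λ∘E, F)` is jointly measurable for every observable `E` iff `C` decomposes
as a sum of positive semidefinite matrices `C⁽ʲ⁾` with diagonals `C⁽ʲ⁾_{nn} = F(j)_{nn}`. -/
theorem schur_channel_incompatibility_breaking_iff
    {d : ℕ} (hd : 1 ≤ d) (C : Matrix (Fin d) (Fin d) ℂ)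
    (hC : C.PosSemidef) (hCdiag : ∀ n, C n n = 1)
    {Ω₂ : Type*} [Fintype Ω₂] [Nonempty Ω₂]
    (F : Ω₂ → Matrix (Fin d) (Fin d) ℂ) (hF : IsObservable F)
    (hFdiag : ∀ j, ∀ n m : Fin d, n ≠ m → F j n m = 0) :
    (∀ (Ω₁ : Type) (_ : Fintype Ω₁) (_ : Nonempty Ω₁)
        (E : Ω₁ → Matrix (Fin d) (Fin d) ℂ), IsObservable E →
        JointlyMeasurable (fun i => C.hadamard (E i)) F) ↔
    (∃ C' : Ω₂ → Matrix (Fin d) (Fin d) ℂ,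
        (∀ j, (C' j).PosSemidef) ∧ ∑ j, C' j = C ∧ ∀ j n, C' j n n = F j n n) := by
  classical
  constructor
  · intro h
    -- the "sign" observable
    set v : (Fin d → Bool) → Fin d → ℂ := fun s n => if s n then 1 else -1 with hv
    have hv2 : ∀ s n, v s n * v s n = 1 := by
      intro s n; by_cases hs : s n <;> simp [hv, hs]
    have hvstar : ∀ s n, star (v s n) = v s n := by
      intro s n; by_cases hs : s n <;> simp [hv, hs]
    have h2d : ((2 : ℂ) ^ d) ≠ 0 := by norm_num
    have h2inv : (0 : ℂ) ≤ ((2 : ℂ) ^ d)⁻¹ := by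
      have : ((2 : ℂ) ^ d)⁻¹ = ((((2 : ℝ) ^ d)⁻¹ : ℝ) : ℂ) := by push_cast; ring
      rw [this]
      exact_mod_cast (by positivity : (0 : ℝ) ≤ ((2 : ℝ) ^ d)⁻¹)
    set E : (Fin d → Bool) → Matrix (Fin d) (Fin d) ℂ :=
      fun s => Matrix.of fun n m => v s n * v s m / 2 ^ d with hEdef
    have hE : IsObservable E := by
      constructor
      · intro s
        refine Matrix.PosSemidef.of_dotProduct_mulVec_nonneg ?_ ?_
        · unfold Matrix.IsHermitian
          ext n m
          simp only [hEdef, conjTranspose_apply, Matrix.of_apply, star_div₀, star_mul',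
            hvstar, star_pow]
          norm_num
          ring
        · intro x
          have key : star x ⬝ᵥ (E s *ᵥ x)
              = ((2 : ℂ) ^ d)⁻¹ * (star (∑ m, v s m * x m) * (∑ m, v s m * x m)) := by
            simp only [hEdef, dotProduct, mulVec, Matrix.of_apply, Pi.star_apply,
              star_sum, star_mul', hvstar, Finset.mul_sum, Finset.sum_mul]
            rw [Finset.sum_comm]
            refine Finset.sum_congr rfl fun n _ => Finset.sum_congr rfl fun m _ => by ring
          rw [key]
          exact mul_nonneg h2inv (star_mul_self_nonneg _)
      · ext n m
        rw [Matrix.sum_apply]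
        by_cases hnm : n = m
        · subst hnm
          have : ∀ s : Fin d → Bool, E s n n = ((2 : ℂ) ^ d)⁻¹ := by
            intro s
            simp only [hEdef, Matrix.of_apply]
            rw [div_eq_mul_inv, hv2]
            ring
          rw [Finset.sum_congr rfl fun s _ => this s, Finset.sum_const]
          rw [Matrix.one_apply_eq]
          have hcard : Fintype.card (Fin d → Bool) = 2 ^ d := by
            simp [Fintype.card_fun]
          rw [Finset.card_univ, hcard, nsmul_eq_mul]
          push_cast
          field_simp
        · -- off diagonal: sum of signs vanishes
          have hS : ∑ s : Fin d → Bool, v s n * v s m = 0 := by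
            set f : (Fin d → Bool) → (Fin d → Bool) := fun s => Function.update s n (!(s n))
              with hf
            have hinv : Function.Involutive f := by
              intro s
              funext k
              by_cases hk : k = n
              · subst hk; simp [hf]
              · simp [hf, Function.update_of_ne hk]
            have hfn : ∀ s, v (f s) n = - v s n := by
              intro s
              by_cases hs : s n <;> simp [hf, hv, hs]
            have hfm : ∀ s, v (f s) m = v s m := by
              intro s
              have hm : m ≠ n := fun hh => hnm hh.symm
              simp [hf, hv, Function.update_of_ne hm]
            have hswap : ∑ s : Fin d → Bool, v s n * v s m
                = ∑ s : Fin d → Bool, v (f s) n * v (f s) m :=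
              (Fintype.sum_bijective f hinv.bijective _ _ fun s => rfl).symm
            have : ∑ s : Fin d → Bool, v s n * v s m
                = - ∑ s : Fin d → Bool, v s n * v s m := by
              calc ∑ s : Fin d → Bool, v s n * v s m
                  = ∑ s : Fin d → Bool, v (f s) n * v (f s) m := hswap
                _ = ∑ s : Fin d → Bool, -(v s n * v s m) :=
                    Finset.sum_congr rfl fun s _ => by rw [hfn, hfm]; ring
                _ = - ∑ s : Fin d → Bool, v s n * v s m := by
                    rw [Finset.sum_neg_distrib]
            linear_combination (1/2 : ℂ) * this
          have : ∀ s : Fin d → Bool, E s n m = v s n * v s m * ((2 : ℂ) ^ d)⁻¹ := by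
            intro s; simp only [hEdef, Matrix.of_apply]; ring
          rw [Finset.sum_congr rfl fun s _ => this s, ← Finset.sum_mul, hS,
            Matrix.one_apply_ne hnm]
          ring
    obtain ⟨G, hGpsd, hGE, hGF⟩ := h (Fin d → Bool) inferInstance inferInstance E hE
    set D : (Fin d → Bool) → Matrix (Fin d) (Fin d) ℂ := fun s => Matrix.diagonal (v s)
      with hD
    have hDH : ∀ s, (D s)ᴴ = D s := by
      intro s
      rw [hD]
      simp only [Matrix.diagonal_conjTranspose]
      rw [show star (v s) = v s from funext fun n => hvstar s n]
    have key : ∀ s, D s * C.hadamard (E s) * D s = ((2 : ℂ) ^ d)⁻¹ • C := by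
      intro s
      ext n m
      simp only [hD, hEdef, Matrix.mul_diagonal, Matrix.diagonal_mul, hadamard_apply,
        Matrix.of_apply, Matrix.smul_apply, smul_eq_mul]
      calc v s n * (C n m * (v s n * v s m / 2 ^ d)) * v s m
          = (v s n * v s n) * (v s m * v s m) * (C n m / 2 ^ d) := by ring
        _ = ((2 : ℂ) ^ d)⁻¹ * C n m := by rw [hv2, hv2]; ring
    refine ⟨fun j => ∑ s, D s * G (s, j) * D s, ?_, ?_, ?_⟩
    · intro j
      refine posSemidef_sum' _ _ fun s _ => ?_
      have := (hGpsd (s, j)).conjTranspose_mul_mul_same (D s)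
      rwa [hDH] at this
    · rw [Finset.sum_comm]
      have hone : ∀ s, ∑ j, D s * G (s, j) * D s = ((2 : ℂ) ^ d)⁻¹ • C := by
        intro s
        rw [← Matrix.sum_mul, ← Matrix.mul_sum, hGE s, key s]
      rw [Finset.sum_congr rfl fun s _ => hone s, Finset.sum_const, Finset.card_univ]
      have hcard : Fintype.card (Fin d → Bool) = 2 ^ d := by simp [Fintype.card_fun]
      rw [hcard, ← Nat.cast_smul_eq_nsmul ℂ, smul_smul]
      push_cast
      rw [mul_inv_cancel₀ h2d, one_smul]
    · intro j n
      show (∑ s : Fin d → Bool, D s * G (s, j) * D s) n n = F j n n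
      rw [Matrix.sum_apply]
      have hterm : ∀ s, (D s * G (s, j) * D s) n n = G (s, j) n n := by
        intro s
        simp only [hD, Matrix.mul_diagonal, Matrix.diagonal_mul]
        calc v s n * G (s, j) n n * v s n = G (s, j) n n * (v s n * v s n) := by ring
          _ = G (s, j) n n := by rw [hv2]; ring
      rw [Finset.sum_congr rfl fun s _ => hterm s, ← Matrix.sum_apply, hGF j]
  · rintro ⟨C', hC'psd, hC'sum, hC'diag⟩ Ω₁ _ _ E hE
    refine ⟨fun p => (C' p.2).hadamard (E p.1),
      fun p => posSemidef_hadamard (hC'psd p.2) (hE.1 p.1), ?_, ?_⟩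
    · intro i
      ext n m
      rw [Matrix.sum_apply]
      simp only [hadamard_apply]
      rw [← Finset.sum_mul, ← Matrix.sum_apply, hC'sum]
    · intro j
      ext n m
      rw [Matrix.sum_apply]
      simp only [hadamard_apply]
      rw [← Finset.mul_sum, ← Matrix.sum_apply, hE.2]
      by_cases hnm : n = m
      · subst hnm
        rw [Matrix.one_apply_eq, mul_one, hC'diag]
      · rw [Matrix.one_apply_ne hnm, mul_zero, hFdiag j n m hnm]
end

section
/- Let (σ_k)_{k∈K} be a finite family of density matrices in Matrix (Fin d) (Fin d) ℂ and let (R_k)_{k∈K} be a finite-outcome observable on ℂ^d (each R_k positive semidefinite, ∑_k R_k = 1). Define the map Λ(A) := ∑_k tr(σ_k A) R_k. Then for ANY pair of finite-outcome observables E and F on ℂ^d, the observables Λ∘E and Λ∘F are jointly measurable; a joint observable is G(i,j) := ∑_k tr(σ_k E(i)) tr(σ_k F(j)) R_k. -/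
open Matrix BigOperators
open scoped ComplexOrder

lemma myTraceNonneg {n : Type*} [Fintype n] [DecidableEq n] {A : Matrix n n ℂ}
    (hA : A.PosSemidef) : 0 ≤ A.trace := by
  rw [Matrix.trace]
  apply Finset.sum_nonneg
  intro i _
  have := hA.dotProduct_mulVec_nonneg (Pi.single i 1)
  simpa [dotProduct, Matrix.mulVec, Pi.single_apply] using this

open scoped MatrixOrder in
lemma myTraceMulNonneg {n : Type*} [Fintype n] [DecidableEq n] {A B : Matrix n n ℂ}
    (hA : A.PosSemidef) (hB : B.PosSemidef) : 0 ≤ (A * B).trace := by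
  have h1 : A = CFC.sqrt A * CFC.sqrt A := (CFC.sqrt_mul_sqrt_self A hA.nonneg).symm
  have h2 : (A * B).trace = ((CFC.sqrt A)ᴴ * B * CFC.sqrt A).trace := by
    conv_lhs => rw [h1, Matrix.mul_assoc, Matrix.trace_mul_comm]
    rw [(CFC.sqrt_nonneg A).posSemidef.1.eq]
  rw [h2]
  exact myTraceNonneg (hB.conjTranspose_mul_mul_same _)

lemma mySmulPSD {n : Type*} [Fintype n] {c : ℂ} (hc : 0 ≤ c) {A : Matrix n n ℂ}
    (hA : A.PosSemidef) : (c • A).PosSemidef := by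
  constructor
  · have hcs : star c = c := by
      rw [Complex.star_def, Complex.conj_eq_iff_im]
      simpa using hc.2.symm
    rw [Matrix.IsHermitian, Matrix.conjTranspose_smul, hA.1.eq, hcs]
  · intro v
    exact (hA.smul hc).2 v

/-- an entanglement-breaking (measure-and-prepare) channel
`Λ(A) = ∑ₖ tr(σₖ A) Rₖ` is incompatibility-breaking: for any pair of observables `E, F`,
the observables `Λ∘E` and `Λ∘F` are jointly measurable, with the explicit joint observable
`G(i,j) = ∑ₖ tr(σₖ E(i)) tr(σₖ F(j)) Rₖ`. -/
theorem entanglement_breaking_channel_is_incompatibility_breaking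
    {d : ℕ} (hd : 1 ≤ d) {K : Type*} [Fintype K] [Nonempty K]
    (σ : K → Matrix (Fin d) (Fin d) ℂ)
    (hσpos : ∀ k, (σ k).PosSemidef) (hσtr : ∀ k, (σ k).trace = 1)
    (R : K → Matrix (Fin d) (Fin d) ℂ) (hR : IsObservable R)
    (Λ : Matrix (Fin d) (Fin d) ℂ → Matrix (Fin d) (Fin d) ℂ)
    (hΛ : ∀ A, Λ A = ∑ k, (Matrix.trace (σ k * A)) • R k)
    {Ω₁ Ω₂ : Type*} [Fintype Ω₁] [Fintype Ω₂] [Nonempty Ω₁] [Nonempty Ω₂]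
    (E : Ω₁ → Matrix (Fin d) (Fin d) ℂ) (F : Ω₂ → Matrix (Fin d) (Fin d) ℂ)
    (hE : IsObservable E) (hF : IsObservable F) :
    (∀ i j, (∑ k, (Matrix.trace (σ k * E i) * Matrix.trace (σ k * F j)) • R k).PosSemidef) ∧
    (∀ i, ∑ j, (∑ k, (Matrix.trace (σ k * E i) * Matrix.trace (σ k * F j)) • R k) = Λ (E i)) ∧
    (∀ j, ∑ i, (∑ k, (Matrix.trace (σ k * E i) * Matrix.trace (σ k * F j)) • R k) = Λ (F j)) ∧
    JointlyMeasurable (fun i => Λ (E i)) (fun j => Λ (F j)) := by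
  have ha : ∀ i k, 0 ≤ Matrix.trace (σ k * E i) := fun i k =>
    myTraceMulNonneg (hσpos k) (hE.1 i)
  have hb : ∀ j k, 0 ≤ Matrix.trace (σ k * F j) := fun j k =>
    myTraceMulNonneg (hσpos k) (hF.1 j)
  have hbsum : ∀ k, ∑ j, Matrix.trace (σ k * F j) = 1 := by
    intro k
    rw [← Matrix.trace_sum, ← Finset.mul_sum, hF.2, mul_one, hσtr]
  have hasum : ∀ k, ∑ i, Matrix.trace (σ k * E i) = 1 := by
    intro k
    rw [← Matrix.trace_sum, ← Finset.mul_sum, hE.2, mul_one, hσtr]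
  have hpsd : ∀ i j,
      (∑ k, (Matrix.trace (σ k * E i) * Matrix.trace (σ k * F j)) • R k).PosSemidef := by
    intro i j
    apply Finset.sum_induction (fun k => (Matrix.trace (σ k * E i) * Matrix.trace (σ k * F j)) • R k)
      (fun M => M.PosSemidef) (fun A B hA hB => hA.add hB) Matrix.PosSemidef.zero
    intro k _
    exact mySmulPSD (mul_nonneg (ha i k) (hb j k)) (hR.1 k)
  have hmargE : ∀ i,
      ∑ j, (∑ k, (Matrix.trace (σ k * E i) * Matrix.trace (σ k * F j)) • R k) = Λ (E i) := by
    intro i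
    rw [hΛ, Finset.sum_comm]
    refine Finset.sum_congr rfl fun k _ => ?_
    rw [← Finset.sum_smul, ← Finset.mul_sum, hbsum, mul_one]
  have hmargF : ∀ j,
      ∑ i, (∑ k, (Matrix.trace (σ k * E i) * Matrix.trace (σ k * F j)) • R k) = Λ (F j) := by
    intro j
    rw [hΛ, Finset.sum_comm]
    refine Finset.sum_congr rfl fun k _ => ?_
    rw [← Finset.sum_smul, ← Finset.sum_mul, hasum, one_mul]
  exact ⟨hpsd, hmargE, hmargF,
    ⟨fun p => ∑ k, (Matrix.trace (σ k * E p.1) * Matrix.trace (σ k * F p.2)) • R k,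
      fun p => hpsd p.1 p.2, hmargE, hmargF⟩⟩
end

section
/- Let I be a finite index type, h : I → ℝ, K ∈ ℕ, and u : Fin K → I → ℂ. Define, for n, m ∈ I, d_{nm} := i·(h(n) − h(m)) − (1/2)·∑_{l} (|u(l)(n)|² + |u(l)(m)|² − 2·conj(u(l)(n))·u(l)(m)). Then for every t ≥ 0, the matrix C(t) ∈ Matrix I I ℂ with entries C(t)_{nm} = exp(t · d_{nm}) is positive semidefinite and has unit diagonal (C(t)_{nn} = 1 for all n). -/
open Matrix BigOperators
open scoped ComplexOrder

private lemma gram_quad_nonneg {I : Type*} [Fintype I] {α : Type*} [Fintype α]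
    (v : α → I → ℂ) (y : I → ℂ) :
    0 ≤ ∑ n, ∑ m, star (y n) * y m * ∑ a, star (v a n) * v a m := by
  have e1 : star y ⬝ᵥ ((Matrix.of fun a n => v a n)ᴴ * (Matrix.of fun a n => v a n)) *ᵥ y
      = ∑ n, ∑ m, star (y n) * y m * ∑ a, star (v a n) * v a m := by
    simp only [dotProduct, Matrix.mulVec, Matrix.mul_apply,
      Matrix.conjTranspose_apply, Matrix.of_apply, Pi.star_apply, Finset.mul_sum,
      Finset.sum_mul]
    refine Finset.sum_congr rfl fun n _ => Finset.sum_congr rfl fun m _ =>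
      Finset.sum_congr rfl fun a _ => by ring
  exact e1 ▸ (Matrix.posSemidef_conjTranspose_mul_self _).dotProduct_mulVec_nonneg y

/-- the multiplier matrix `C(t)_{nm} = exp(t d_{nm})` of a pure-decoherence
Lindblad semigroup, where
`d_{nm} = i(hₙ − hₘ) − ½ ∑ₗ (|uₗ(n)|² + |uₗ(m)|² − 2 conj(uₗ(n)) uₗ(m))`,
is positive semidefinite with unit diagonal for all `t ≥ 0`. -/
theorem pure_decoherence_multiplier_posSemidef
    {I : Type*} [Fintype I] [DecidableEq I] (h : I → ℝ) (K : ℕ) (u : Fin K → I → ℂ)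
    (D : I → I → ℂ)
    (hD : ∀ n m, D n m =
      Complex.I * ((h n : ℂ) - (h m : ℂ)) -
        (1 / 2) * ∑ l, ((‖u l n‖ ^ 2 : ℂ) + (‖u l m‖ ^ 2 : ℂ)
          - 2 * (starRingEnd ℂ) (u l n) * u l m))
    (t : ℝ) (ht : 0 ≤ t) :
    (Matrix.of fun n m => Complex.exp ((t : ℂ) * D n m)).PosSemidef ∧
    (∀ n, Complex.exp ((t : ℂ) * D n n) = 1) := by
  set S : I → I → ℂ := fun n m => ∑ l, (starRingEnd ℂ) (u l n) * u l m with hS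
  set Sa : I → ℝ := fun n => ∑ l, ‖u l n‖ ^ 2 with hSa
  have hD' : ∀ n m, D n m = Complex.I * ((h n : ℂ) - (h m : ℂ))
      - (1 / 2) * (((Sa n : ℝ) : ℂ) + ((Sa m : ℝ) : ℂ)) + S n m := by
    intro n m
    rw [hD]
    have h1 : ∑ l, ((‖u l n‖ ^ 2 : ℂ) + (‖u l m‖ ^ 2 : ℂ)
        - 2 * (starRingEnd ℂ) (u l n) * u l m)
        = ((Sa n : ℝ) : ℂ) + ((Sa m : ℝ) : ℂ) - 2 * S n m := by
      rw [Finset.sum_sub_distrib, Finset.sum_add_distrib, hS, hSa]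
      push_cast
      rw [Finset.mul_sum]
      simp [mul_assoc]
    rw [h1]; ring
  -- diagonal entries
  have hSnn : ∀ n, S n n = ((Sa n : ℝ) : ℂ) := by
    intro n
    rw [hS, hSa]
    push_cast
    refine Finset.sum_congr rfl fun l _ => ?_
    rw [← Complex.ofReal_pow, Complex.sq_norm, Complex.normSq_eq_conj_mul_self]
  have hdiag : ∀ n, Complex.exp ((t : ℂ) * D n n) = 1 := by
    intro n
    have : D n n = 0 := by rw [hD' n n, hSnn n]; ring
    simp [this]
  -- the key exponent decomposition
  set e : I → ℂ := fun n => (t : ℂ) * (-Complex.I * (h n : ℂ) - (1 / 2) * ((Sa n : ℝ) : ℂ))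
    with he
  have hce : ∀ n, (starRingEnd ℂ) (e n)
      = (t : ℂ) * (Complex.I * (h n : ℂ) - (1 / 2) * ((Sa n : ℝ) : ℂ)) := by
    intro n
    simp only [he, _root_.map_mul, map_sub, map_neg, Complex.conj_ofReal, Complex.conj_I,
      map_div₀, _root_.map_one, map_ofNat]
    ring
  have key : ∀ n m, (t : ℂ) * D n m = (starRingEnd ℂ) (e n) + e m + (t : ℂ) * S n m := by
    intro n m
    rw [hD' n m, hce n]
    simp only [he]
    ring
  have hSc : ∀ n m, (starRingEnd ℂ) (S n m) = S m n := by
    intro n m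
    simp only [hS, map_sum, _root_.map_mul, Complex.conj_conj]
    exact Finset.sum_congr rfl fun l _ => mul_comm _ _
  have hHerm : (Matrix.of fun n m => Complex.exp ((t : ℂ) * D n m)).IsHermitian := by
    ext n m
    simp only [Matrix.conjTranspose_apply, Matrix.of_apply, RCLike.star_def]
    rw [← Complex.exp_conj]
    congr 1
    rw [key m n, key n m, map_add, map_add, Complex.conj_conj,
      _root_.map_mul (starRingEnd ℂ) ((t : ℂ)) (S m n), hSc, Complex.conj_ofReal]
    ring
  refine ⟨Matrix.PosSemidef.of_dotProduct_mulVec_nonneg hHerm ?_, hdiag⟩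
  intro x
  set y : I → ℂ := fun n => x n * Complex.exp (e n) with hy
  have hexpz : ∀ z : ℂ, Complex.exp z = ∑' k : ℕ, z ^ k / (Nat.factorial k : ℂ) := by
    intro z
    rw [Complex.exp_eq_exp_ℂ, NormedSpace.exp_eq_tsum_div]
  have hexpD : ∀ n m, Complex.exp ((t : ℂ) * D n m)
      = (starRingEnd ℂ) (Complex.exp (e n)) * Complex.exp (e m)
        * Complex.exp ((t : ℂ) * S n m) := by
    intro n m
    rw [key, Complex.exp_add, Complex.exp_add, Complex.exp_conj]
  have hsummand : ∀ n m : I, Summable (fun k : ℕ =>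
      star (y n) * y m * (((t : ℂ) * S n m) ^ k / (Nat.factorial k : ℂ))) := fun n m =>
    (NormedSpace.expSeries_div_summable ((t : ℂ) * S n m)).mul_left _
  have hQ : star x ⬝ᵥ (Matrix.of fun n m => Complex.exp ((t : ℂ) * D n m)) *ᵥ x
      = ∑' k : ℕ, ∑ n, ∑ m,
          star (y n) * y m * (((t : ℂ) * S n m) ^ k / (Nat.factorial k : ℂ)) := by
    have step1 : star x ⬝ᵥ (Matrix.of fun n m => Complex.exp ((t : ℂ) * D n m)) *ᵥ x
        = ∑ n, ∑ m, star (y n) * y m * Complex.exp ((t : ℂ) * S n m) := by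
      simp only [dotProduct, Matrix.mulVec, Matrix.of_apply, Pi.star_apply,
        Finset.mul_sum]
      refine Finset.sum_congr rfl fun n _ => Finset.sum_congr rfl fun m _ => ?_
      rw [hexpD]
      simp only [hy, star_mul', RCLike.star_def]
      ring
    rw [step1]
    have step2 : ∀ n m : I, star (y n) * y m * Complex.exp ((t : ℂ) * S n m)
        = ∑' k : ℕ, star (y n) * y m * (((t : ℂ) * S n m) ^ k / (Nat.factorial k : ℂ)) := by
      intro n m
      rw [hexpz, tsum_mul_left]
    rw [Finset.sum_congr rfl fun n _ => Finset.sum_congr rfl fun m _ => step2 n m]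
    rw [Finset.sum_congr rfl fun n _ => (Summable.tsum_finsetSum fun m _ => hsummand n m).symm]
    exact (Summable.tsum_finsetSum fun n _ => summable_sum fun m _ => hsummand n m).symm
  rw [hQ]
  refine tsum_nonneg fun k => ?_
  have h1 : ∀ n m : I, ((t : ℂ) * S n m) ^ k / (Nat.factorial k : ℂ)
      = ((t ^ k / Nat.factorial k : ℝ) : ℂ)
        * ∑ p : Fin k → Fin K, star (∏ j, u (p j) n) * ∏ j, u (p j) m := by
    intro n m
    rw [mul_pow]
    simp only [hS]
    rw [Fintype.sum_pow]
    have hp : ∀ p : Fin k → Fin K, (∏ j, (starRingEnd ℂ) (u (p j) n) * u (p j) m)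
        = star (∏ j, u (p j) n) * ∏ j, u (p j) m := by
      intro p
      rw [Finset.prod_mul_distrib, star_prod]
      simp [RCLike.star_def]
    rw [Finset.sum_congr rfl fun p _ => hp p]
    push_cast
    ring
  calc (0 : ℂ) ≤ ((t ^ k / Nat.factorial k : ℝ) : ℂ)
        * ∑ n, ∑ m, star (y n) * y m
            * ∑ p : Fin k → Fin K, star (∏ j, u (p j) n) * ∏ j, u (p j) m := by
        refine mul_nonneg ?_ (gram_quad_nonneg _ y)
        rw [Complex.zero_le_real]
        positivity
    _ = ∑ n, ∑ m, star (y n) * y m * (((t : ℂ) * S n m) ^ k / (Nat.factorial k : ℂ)) := by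
        rw [Finset.mul_sum]
        refine Finset.sum_congr rfl fun n _ => ?_
        rw [Finset.mul_sum]
        refine Finset.sum_congr rfl fun m _ => ?_
        rw [h1 n m]
        ring
end

section
/- Let C ∈ Matrix I I ℂ (I a finite type) satisfy C_{nn} = 1 for all n and |C_{nm}| < 1 for all n ≠ m. If A ∈ Matrix I I ℂ satisfies C ⋆ (Aᴴ A) = (C ⋆ A)ᴴ (C ⋆ A), where ⋆ is the entrywise (Schur/Hadamard) product and Aᴴ the conjugate transpose, then A is diagonal (A_{nm} = 0 for all n ≠ m). -/
open Matrix BigOperators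

/-- for a Schur multiplier with unit diagonal and strictly contractive
off-diagonal entries, any matrix `A` satisfying the decoherence-free condition
`C ⋆ (Aᴴ A) = (C ⋆ A)ᴴ (C ⋆ A)` must be diagonal. -/
theorem decoherence_free_algebra_diagonal
    {I : Type*} [Fintype I] (C A : Matrix I I ℂ)
    (hCdiag : ∀ n, C n n = 1)
    (hCoff : ∀ n m, n ≠ m → ‖C n m‖ < 1)
    (hA : C.hadamard (Aᴴ * A) = (C.hadamard A)ᴴ * (C.hadamard A)) :
    ∀ n m, n ≠ m → A n m = 0 := by
  intro n m hnm
  have h := congrFun (congrFun hA m) m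
  simp only [hadamard_apply, mul_apply, conjTranspose_apply, hCdiag m, one_mul] at h
  have h1 : (↑(∑ k, Complex.normSq (A k m)) : ℂ)
      = ↑(∑ k, Complex.normSq (C k m) * Complex.normSq (A k m)) := by
    push_cast
    calc ∑ k, ((Complex.normSq (A k m) : ℂ))
        = ∑ k, star (A k m) * A k m :=
          Finset.sum_congr rfl fun k _ => Complex.normSq_eq_conj_mul_self
      _ = ∑ k, star (C k m * A k m) * (C k m * A k m) := h
      _ = ∑ k, ((Complex.normSq (C k m) : ℂ)) * ((Complex.normSq (A k m) : ℂ)) := by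
          refine Finset.sum_congr rfl fun k _ => ?_
          have h2 : star (C k m * A k m) * (C k m * A k m)
              = ((Complex.normSq (C k m * A k m) : ℝ) : ℂ) := Complex.normSq_eq_conj_mul_self.symm
          rw [h2, Complex.normSq_mul]
          push_cast
          ring
  have hre : ∑ k, Complex.normSq (A k m)
      = ∑ k, Complex.normSq (C k m) * Complex.normSq (A k m) :=
    Complex.ofReal_inj.mp h1
  have hsum : ∑ k, (1 - Complex.normSq (C k m)) * Complex.normSq (A k m) = 0 := by
    simp only [sub_mul, one_mul, Finset.sum_sub_distrib]
    rw [hre]; ring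
  have hnonneg : ∀ k ∈ Finset.univ,
      0 ≤ (1 - Complex.normSq (C k m)) * Complex.normSq (A k m) := by
    intro k _
    apply mul_nonneg _ (Complex.normSq_nonneg _)
    rw [sub_nonneg]
    by_cases hk : k = m
    · subst hk; rw [hCdiag k]; simp
    · have := hCoff k m hk
      rw [Complex.normSq_eq_norm_sq]
      nlinarith [norm_nonneg (C k m)]
  have hzero := (Finset.sum_eq_zero_iff_of_nonneg hnonneg).mp hsum n (Finset.mem_univ n)
  have hpos : 0 < 1 - Complex.normSq (C n m) := by
    have := hCoff n m hnm
    rw [Complex.normSq_eq_norm_sq]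
    nlinarith [norm_nonneg (C n m)]
  have : Complex.normSq (A n m) = 0 := by
    rcases mul_eq_zero.mp hzero with h' | h'
    · linarith
    · exact h'
  exact Complex.normSq_eq_zero.mp this
end

section
/- Let e₀, f₀ ∈ ℝ² and e_z, f_z ∈ ℝ with ‖e₀‖² + e_z² ≤ 1 and ‖f₀‖² + f_z² ≤ 1, and let x ∈ ℝ with 0 ≤ x ≤ 1. Then √(x‖e₀+f₀‖² + (e_z+f_z)²) + √(x‖e₀−f₀‖² + (e_z−f_z)²) ≤ 2 holds if and only if (e₀·f₀)²·x² − [‖e₀−f₀‖² + 2(e₀·f₀)(1 − e_z f_z)]·x + (1−e_z²)(1−f_z²) ≥ 0, where e₀·f₀ denotes the Euclidean inner product on ℝ². -/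
open scoped RealInnerProductSpace

private lemma sqrt_add_le_two_iff (A B : ℝ) (hA0 : 0 ≤ A) (hB0 : 0 ≤ B) (hS : A + B ≤ 4) :
    Real.sqrt A + Real.sqrt B ≤ 2 ↔ 4 * (A * B) ≤ (4 - A - B) ^ 2 := by
  have hAB0 : 0 ≤ A * B := mul_nonneg hA0 hB0
  have sA := Real.sqrt_nonneg A
  have sB := Real.sqrt_nonneg B
  have sA2 := Real.sq_sqrt hA0
  have sB2 := Real.sq_sqrt hB0
  have sAB2 := Real.sq_sqrt hAB0
  have sAB := Real.sqrt_nonneg (A * B)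
  have hmul : Real.sqrt A * Real.sqrt B = Real.sqrt (A * B) := (Real.sqrt_mul hA0 B).symm
  constructor
  · intro h
    have h4 := mul_self_le_mul_self (add_nonneg sA sB) h
    have h2 : 2 * Real.sqrt (A * B) ≤ 4 - A - B := by nlinarith
    have h5 := mul_self_le_mul_self (by positivity : (0:ℝ) ≤ 2 * Real.sqrt (A * B)) h2
    nlinarith
  · intro h
    have h1 : 2 * Real.sqrt (A * B) ≤ 4 - A - B := by
      have h2 : A * B ≤ ((4 - A - B) / 2) ^ 2 := by nlinarith
      have h3 : Real.sqrt (A * B) ≤ (4 - A - B) / 2 := by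
        calc Real.sqrt (A * B) ≤ Real.sqrt (((4 - A - B) / 2) ^ 2) := Real.sqrt_le_sqrt h2
          _ = (4 - A - B) / 2 := Real.sqrt_sq (by linarith)
      linarith
    nlinarith [sq_nonneg (Real.sqrt A + Real.sqrt B - 2)]

/-- the algebraic form of the joint-measurability criterion for two unbiased
qubit observables under dephasing: for Bloch data `(e₀, e_z)`, `(f₀, f_z)` and damping
parameter `x ∈ [0,1]`, the inequality
`√(x‖e₀+f₀‖² + (e_z+f_z)²) + √(x‖e₀−f₀‖² + (e_z−f_z)²) ≤ 2` holds iff the quadratic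
`(e₀·f₀)² x² − [‖e₀−f₀‖² + 2(e₀·f₀)(1−e_z f_z)] x + (1−e_z²)(1−f_z²)` is nonnegative. -/
theorem dephasing_jointMeasurability_quadratic_criterion
    (e₀ f₀ : EuclideanSpace ℝ (Fin 2)) (ez fz : ℝ)
    (he : ‖e₀‖ ^ 2 + ez ^ 2 ≤ 1) (hf : ‖f₀‖ ^ 2 + fz ^ 2 ≤ 1)
    (x : ℝ) (hx0 : 0 ≤ x) (hx1 : x ≤ 1) :
    Real.sqrt (x * ‖e₀ + f₀‖ ^ 2 + (ez + fz) ^ 2) +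
        Real.sqrt (x * ‖e₀ - f₀‖ ^ 2 + (ez - fz) ^ 2) ≤ 2 ↔
      ⟪e₀, f₀⟫ ^ 2 * x ^ 2 -
          (‖e₀ - f₀‖ ^ 2 + 2 * ⟪e₀, f₀⟫ * (1 - ez * fz)) * x +
          (1 - ez ^ 2) * (1 - fz ^ 2) ≥ 0 := by
  have hplus : ‖e₀ + f₀‖ ^ 2 = ‖e₀‖ ^ 2 + 2 * ⟪e₀, f₀⟫ + ‖f₀‖ ^ 2 := norm_add_sq_real e₀ f₀
  have hminus : ‖e₀ - f₀‖ ^ 2 = ‖e₀‖ ^ 2 - 2 * ⟪e₀, f₀⟫ + ‖f₀‖ ^ 2 := norm_sub_sq_real e₀ f₀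
  set p := ⟪e₀, f₀⟫ with hp
  set a := ‖e₀‖ ^ 2 with ha
  set b := ‖f₀‖ ^ 2 with hb
  set A := x * ‖e₀ + f₀‖ ^ 2 + (ez + fz) ^ 2 with hA
  set B := x * ‖e₀ - f₀‖ ^ 2 + (ez - fz) ^ 2 with hB
  have ha0 : 0 ≤ a := by positivity
  have hb0 : 0 ≤ b := by positivity
  have hA0 : 0 ≤ A := by rw [hA, hplus]; nlinarith [sq_nonneg (ez + fz)]
  have hB0 : 0 ≤ B := by rw [hB, hminus]; nlinarith [sq_nonneg (ez - fz)]
  have hS : A + B ≤ 4 := by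
    rw [hA, hB, hplus, hminus]; nlinarith [sq_nonneg (ez - fz), sq_nonneg (ez + fz)]
  rw [sqrt_add_le_two_iff A B hA0 hB0 hS]
  have key : (4 - A - B) ^ 2 - 4 * (A * B) =
      16 * (p ^ 2 * x ^ 2 - ((a - 2 * p + b) + 2 * p * (1 - ez * fz)) * x
        + (1 - ez ^ 2) * (1 - fz ^ 2)) := by
    rw [hA, hB, hplus, hminus]; ring
  rw [hminus]
  constructor
  · intro h; linarith
  · intro h; linarith
end

section
/- Let e, f ∈ ℝ³ with ‖e‖ ≤ 1 and ‖f‖ ≤ 1, and consider the binary qubit observables E = (E₊, E₋) and F = (F₊, F₋) on ℂ² given by E_± = (1/2)(1 ± e·σ) and F_± = (1/2)(1 ± f·σ), where σ = (σ₁, σ₂, σ₃) are the Pauli matrices and e·σ = e₁σ₁ + e₂σ₂ + e₃σ₃. If ‖e + f‖ + ‖e − f‖ ≤ 2, then E and F are jointly measurable. -/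
open Matrix BigOperators
open scoped ComplexOrder

/-- The Pauli matrices. -/
noncomputable def pauli : Fin 3 → Matrix (Fin 2) (Fin 2) ℂ
  | 0 => !![0, 1; 1, 0]
  | 1 => !![0, -Complex.I; Complex.I, 0]
  | 2 => !![1, 0; 0, -1]

/-- `e·σ` for a real vector `e ∈ ℝ³`. -/
noncomputable def dotPauli (e : EuclideanSpace ℝ (Fin 3)) : Matrix (Fin 2) (Fin 2) ℂ :=
  ∑ i, (e i : ℂ) • pauli i

/-- The binary unbiased qubit observable with Bloch vector `e`:
`E(±) = ½(1 ± e·σ)`. -/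
noncomputable def blochObs (e : EuclideanSpace ℝ (Fin 3)) :
    Bool → Matrix (Fin 2) (Fin 2) ℂ := fun b =>
  (2 : ℂ)⁻¹ • ((1 : Matrix (Fin 2) (Fin 2) ℂ) + (if b then (1 : ℂ) else -1) • dotPauli e)

set_option maxHeartbeats 1000000 in
lemma psd_aux (t a b c : ℝ) (ht : 0 ≤ t) (h : a^2+b^2+c^2 ≤ t^2) :
    (!![((t+c : ℝ) : ℂ), (a : ℂ) - b*Complex.I; (a : ℂ) + b*Complex.I, ((t-c : ℝ) : ℂ)]).PosSemidef := by
  rw [Matrix.posSemidef_iff_dotProduct_mulVec]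
  constructor
  · ext i j
    fin_cases i <;> fin_cases j <;>
      simp [Matrix.conjTranspose_apply, Complex.ext_iff]
  · intro x
    have key : star x ⬝ᵥ (!![((t+c : ℝ) : ℂ), (a : ℂ) - b*Complex.I; (a : ℂ) + b*Complex.I, ((t-c : ℝ) : ℂ)]).mulVec x
        = (((t+c) * ((x 0).re^2 + (x 0).im^2) + (t-c) * ((x 1).re^2 + (x 1).im^2)
           + 2*a*((x 0).re*(x 1).re + (x 0).im*(x 1).im)
           + 2*b*((x 0).re*(x 1).im - (x 0).im*(x 1).re) : ℝ) : ℂ) := by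
      simp [dotProduct, Matrix.mulVec, Fin.sum_univ_two, Complex.ext_iff,
        Complex.mul_re, Complex.mul_im, pow_two]
      constructor <;> ring
    rw [key, Complex.zero_le_real]
    set p := (x 0).re; set q := (x 0).im; set r := (x 1).re; set s := (x 1).im
    set u₁ := p^2+q^2-r^2-s^2 with hu1
    set u₂ := 2*(p*r+q*s) with hu2
    set u₃ := 2*(p*s-q*r) with hu3
    set N := p^2+q^2+r^2+s^2 with hNdef
    have hN0 : 0 ≤ N := by positivity
    have hlag : u₁^2+u₂^2+u₃^2 = N^2 := by rw [hu1, hu2, hu3, hNdef]; ring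
    have hcs : (c*u₁+a*u₂+b*u₃)^2 ≤ (a^2+b^2+c^2)*(u₁^2+u₂^2+u₃^2) := by
      nlinarith [sq_nonneg (c*u₂-a*u₁), sq_nonneg (c*u₃-b*u₁), sq_nonneg (a*u₃-b*u₂)]
    have hD2 : (c*u₁+a*u₂+b*u₃)^2 ≤ (t*N)^2 := by
      rw [hlag] at hcs
      calc (c*u₁+a*u₂+b*u₃)^2 ≤ (a^2+b^2+c^2)*N^2 := hcs
        _ ≤ t^2*N^2 := by nlinarith [sq_nonneg N]
        _ = (t*N)^2 := by ring
    have hQ : (t+c) * (p ^ 2 + q ^ 2) + (t-c) * (r ^ 2 + s ^ 2) + 2*a*(p*r+q*s) + 2*b*(p*s-q*r)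
        = t*N + (c*u₁+a*u₂+b*u₃) := by rw [hu1, hu2, hu3, hNdef]; ring
    rw [hQ]
    nlinarith [mul_nonneg ht hN0, hD2]

lemma dotPauli_explicit (v : EuclideanSpace ℝ (Fin 3)) :
    dotPauli v = !![(v 2 : ℂ), (v 0 : ℂ) - (v 1 : ℂ) * Complex.I;
                   (v 0 : ℂ) + (v 1 : ℂ) * Complex.I, -(v 2 : ℂ)] := by
  unfold dotPauli
  rw [Fin.sum_univ_three]
  ext i j
  fin_cases i <;> fin_cases j <;> simp [pauli] <;> ring

lemma dotPauli_smul_add (r s : ℝ) (u v : EuclideanSpace ℝ (Fin 3)) :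
    dotPauli (r • u + s • v) = (r : ℂ) • dotPauli u + (s : ℂ) • dotPauli v := by
  rw [dotPauli_explicit, dotPauli_explicit, dotPauli_explicit]
  have h : ∀ i : Fin 3, (r • u + s • v) i = r * u i + s * v i := by
    intro i; simp [PiLp.add_apply, PiLp.smul_apply, smul_eq_mul]
  ext i j
  fin_cases i <;> fin_cases j <;> simp [h, Complex.ext_iff] <;> ring

lemma smul_psd (r : ℝ) (hr : 0 ≤ r) {M : Matrix (Fin 2) (Fin 2) ℂ} (h : M.PosSemidef) :
    ((r : ℂ) • M).PosSemidef := by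
  rw [Matrix.posSemidef_iff_dotProduct_mulVec]
  constructor
  · unfold Matrix.IsHermitian
    rw [conjTranspose_smul, h.1.eq]
    congr 1
    simp [Complex.ext_iff]
  · intro x
    rw [Matrix.smul_mulVec, dotProduct_smul]
    exact mul_nonneg (Complex.zero_le_real.mpr hr) (h.dotProduct_mulVec_nonneg x)

lemma psd_main (t : ℝ) (v : EuclideanSpace ℝ (Fin 3)) (h : ‖v‖ ≤ t) :
    ((t : ℂ) • (1 : Matrix (Fin 2) (Fin 2) ℂ) + dotPauli v).PosSemidef := by
  have h0 : 0 ≤ t := le_trans (norm_nonneg v) h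
  have hnorm : ‖v‖^2 = (v 0)^2 + (v 1)^2 + (v 2)^2 := by
    rw [EuclideanSpace.norm_eq, Real.sq_sqrt (by positivity)]
    simp [Fin.sum_univ_three, Real.norm_eq_abs, sq_abs]
  have hsq : (v 0)^2 + (v 1)^2 + (v 2)^2 ≤ t^2 := by
    rw [← hnorm]; exact pow_le_pow_left₀ (norm_nonneg v) h 2
  have hk := psd_aux t (v 0) (v 1) (v 2) h0 hsq
  have heq : (t : ℂ) • (1 : Matrix (Fin 2) (Fin 2) ℂ) + dotPauli v
      = !![((t + v 2 : ℝ) : ℂ), (v 0 : ℂ) - (v 1 : ℂ)*Complex.I;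
          (v 0 : ℂ) + (v 1 : ℂ)*Complex.I, ((t - v 2 : ℝ) : ℂ)] := by
    rw [dotPauli_explicit]
    ext i j
    fin_cases i <;> fin_cases j <;> simp [Matrix.one_apply, Complex.ext_iff] <;> ring
  rw [heq]
  exact hk

/-- Busch criterion, sufficiency: two binary unbiased qubit observables with
Bloch vectors `e, f` satisfying `‖e + f‖ + ‖e − f‖ ≤ 2` are jointly measurable. -/
theorem unbiased_qubit_jointMeasurable_of_busch
    (e f : EuclideanSpace ℝ (Fin 3)) (he : ‖e‖ ≤ 1) (hf : ‖f‖ ≤ 1)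
    (hbusch : ‖e + f‖ + ‖e - f‖ ≤ 2) :
    JointlyMeasurable (blochObs e) (blochObs f) := by
  set γ : ℝ := (‖e + f‖ - ‖e - f‖) / 2 with hγ
  refine ⟨fun p => (((4:ℝ)⁻¹ : ℝ) : ℂ) •
      ((((1 + (if p.1 = p.2 then γ else -γ) : ℝ)) : ℂ) • 1 +
        dotPauli ((if p.1 then (1 : ℝ) else -1) • e + (if p.2 then (1 : ℝ) else -1) • f)),
    ?_, ?_, ?_⟩
  · rintro ⟨a, b⟩
    beta_reduce
    apply smul_psd _ (by norm_num)
    cases a <;> cases b <;> simp only [if_true, if_false, Bool.false_eq_true, Bool.true_eq_false, eq_self_iff_true,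
      reduceIte, decide_eq_true_eq] <;> apply psd_main
    · have hv : (-1 : ℝ) • e + (-1 : ℝ) • f = -(e + f) := by module
      rw [hv, norm_neg]; linarith [norm_nonneg (e - f)]
    · have hv : (-1 : ℝ) • e + (1 : ℝ) • f = -(e - f) := by module
      rw [hv, norm_neg]; linarith [norm_nonneg (e + f)]
    · have hv : (1 : ℝ) • e + (-1 : ℝ) • f = e - f := by module
      rw [hv]; linarith [norm_nonneg (e + f)]
    · have hv : (1 : ℝ) • e + (1 : ℝ) • f = e + f := by module
      rw [hv]; linarith [norm_nonneg (e - f)]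
  · intro i
    rw [Fintype.sum_bool]
    cases i <;>
      simp only [if_true, if_false, Bool.false_eq_true, Bool.true_eq_false, eq_self_iff_true,
        reduceIte, decide_eq_true_eq, dotPauli_smul_add, blochObs] <;>
      push_cast <;> module
  · intro j
    rw [Fintype.sum_bool]
    cases j <;>
      simp only [if_true, if_false, Bool.false_eq_true, Bool.true_eq_false, eq_self_iff_true,
        reduceIte, decide_eq_true_eq, dotPauli_smul_add, blochObs] <;>
      push_cast <;> module
end

section
/- Let N ≥ 1, let q : Fin (N+1) → ℝ be a probability vector (q_k ≥ 0, ∑_k q_k = 1), and let α ∈ [0,1]. For k ∈ Fin (N+1) define the probability vector p^{(k)} by p^{(k)}(j) = α·(if j = k then 1 else 0) + (1−α)·q_j, and set u_k(α) := √(q_k (1−α)(α + (1−α) q_k)) − q_k(1−α). Then for all k ≠ k' in Fin (N+1), the squared Hellinger distance satisfies 1 − ∑_j √(p^{(k)}(j) · p^{(k')}(j)) = α − u_k(α) − u_{k'}(α). -/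
open BigOperators

/-- the squared Hellinger distance between the outcome distributions
`p^{(k)} = α δ_k + (1−α) q` of the interpolated observable `F_α` satisfies
`d²(p^{(k)}, p^{(k')}) = α − u_k(α) − u_{k'}(α)` for `k ≠ k'`, where
`u_k(α) = √(q_k(1−α)(α+(1−α)q_k)) − q_k(1−α)`. -/
theorem hellinger_distance_interpolated_observable
    {N : ℕ} (hN : 1 ≤ N) (q : Fin (N + 1) → ℝ)
    (hq0 : ∀ k, 0 ≤ q k) (hq1 : ∑ k, q k = 1)
    (α : ℝ) (hα0 : 0 ≤ α) (hα1 : α ≤ 1)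
    (p : Fin (N + 1) → Fin (N + 1) → ℝ)
    (hp : ∀ k j, p k j = α * (if j = k then 1 else 0) + (1 - α) * q j)
    (u : Fin (N + 1) → ℝ)
    (hu : ∀ k, u k = Real.sqrt (q k * (1 - α) * (α + (1 - α) * q k)) - q k * (1 - α)) :
    ∀ k k' : Fin (N + 1), k ≠ k' →
      1 - ∑ j, Real.sqrt (p k j * p k' j) = α - u k - u k' := by
  intro k k' hkk'
  have h1α : 0 ≤ 1 - α := by linarith
  have key : ∀ j, Real.sqrt (p k j * p k' j)
      = (1 - α) * q j
        + (if j = k then Real.sqrt (q k * (1 - α) * (α + (1 - α) * q k)) - (1 - α) * q k else 0)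
        + (if j = k' then Real.sqrt (q k' * (1 - α) * (α + (1 - α) * q k')) - (1 - α) * q k' else 0) := by
    intro j
    rw [hp, hp]
    by_cases hjk : j = k
    · subst hjk
      have hne : ¬ (j = k') := hkk'
      simp only [if_pos rfl, if_neg hne, if_true]
      rw [show (α * 1 + (1 - α) * q j) * (α * 0 + (1 - α) * q j)
            = q j * (1 - α) * (α + (1 - α) * q j) by ring]
      ring
    · by_cases hjk' : j = k'
      · subst hjk'
        simp only [if_pos rfl, if_neg hjk, if_true]
        rw [show (α * 0 + (1 - α) * q j) * (α * 1 + (1 - α) * q j)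
              = q j * (1 - α) * (α + (1 - α) * q j) by ring]
        ring
      · simp only [if_neg hjk, if_neg hjk']
        rw [show (α * 0 + (1 - α) * q j) * (α * 0 + (1 - α) * q j)
              = ((1 - α) * q j) ^ 2 by ring]
        rw [Real.sqrt_sq (mul_nonneg h1α (hq0 j))]
        ring
  simp_rw [key]
  rw [Finset.sum_add_distrib, Finset.sum_add_distrib, Finset.sum_ite_eq' Finset.univ,
    Finset.sum_ite_eq' Finset.univ, if_pos (Finset.mem_univ k), if_pos (Finset.mem_univ k'),
    ← Finset.mul_sum, hq1, hu k, hu k']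
  ring
end
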